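/- Let V(ρ) = √(Λ₁(ρ)Λ₂(ρ) + 1 − Γ(ρ)²) and let Ē = {Ψ₊Ψ₊*, Ψ₋Ψ₋*, Φ₊Φ₊*, Φ₋Φ₋*} be the set of Bell states. Then for every ρ in the state space S, the bounds C₁·d_B(ρ, Ē) ≤ V(ρ) ≤ C₂·d_B(ρ, Ē) hold with C₁ = 1/√6 and C₂ = 2√2, where d_B(ρ, Ē) = min over ρ̄ ∈ Ē of d_B(ρ, ρ̄). -/

import Mathlib

open Matrix ComplexOrder

noncomputable section

/-- Pauli matrices. -/
def σx : Matrix (Fin 2) (Fin 2) ℂ := !![0, 1; 1, 0]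
def σy : Matrix (Fin 2) (Fin 2) ℂ := !![0, -Complex.I; Complex.I, 0]
def σz : Matrix (Fin 2) (Fin 2) ℂ := !![1, 0; 0, -1]
def id2 : Matrix (Fin 2) (Fin 2) ℂ := 1

/-- Kronecker product of two `2 × 2` matrices, indexed by `Fin 4`
(with the identification `(i,k) ↦ 2*i + k`). -/
def kron (A B : Matrix (Fin 2) (Fin 2) ℂ) : Matrix (Fin 4) (Fin 4) ℂ :=
  fun i j => A ⟨i.val / 2, by omega⟩ ⟨j.val / 2, by omega⟩ *
             B ⟨i.val % 2, by omega⟩ ⟨j.val % 2, by omega⟩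

/-- The measurement matrices `L_z = σ_z ⊗ σ_z` and `L_x = σ_x ⊗ σ_x`. -/
def Lz : Matrix (Fin 4) (Fin 4) ℂ := kron σz σz
def Lx : Matrix (Fin 4) (Fin 4) ℂ := kron σx σx

/-- The Bell vectors. -/
def PsiPlus : Fin 4 → ℂ := ![(Real.sqrt 2 : ℂ)⁻¹, 0, 0, (Real.sqrt 2 : ℂ)⁻¹]
def PsiMinus : Fin 4 → ℂ := ![(Real.sqrt 2 : ℂ)⁻¹, 0, 0, -(Real.sqrt 2 : ℂ)⁻¹]
def PhiPlus : Fin 4 → ℂ := ![0, (Real.sqrt 2 : ℂ)⁻¹, (Real.sqrt 2 : ℂ)⁻¹, 0]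
def PhiMinus : Fin 4 → ℂ := ![0, (Real.sqrt 2 : ℂ)⁻¹, -(Real.sqrt 2 : ℂ)⁻¹, 0]

/-- The rank-one projection `ξξ*`. -/
def outer (ξ : Fin 4 → ℂ) : Matrix (Fin 4) (Fin 4) ℂ := Matrix.vecMulVec ξ (star ξ)

/-- The set of the four Bell states. -/
def BellStates : Set (Matrix (Fin 4) (Fin 4) ℂ) :=
  {outer PsiPlus, outer PsiMinus, outer PhiPlus, outer PhiMinus}

/-- The state space `S`. -/
def IsState (ρ : Matrix (Fin 4) (Fin 4) ℂ) : Prop := ρ.PosSemidef ∧ ρ.trace = 1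

def Λ₁ (ρ : Matrix (Fin 4) (Fin 4) ℂ) : ℝ := (ρ 0 0).re + (ρ 3 3).re
def Λ₂ (ρ : Matrix (Fin 4) (Fin 4) ℂ) : ℝ := (ρ 1 1).re + (ρ 2 2).re
def Γ (ρ : Matrix (Fin 4) (Fin 4) ℂ) : ℝ := 2 * (ρ 1 2).re + 2 * (ρ 0 3).re
def Δ (ρ : Matrix (Fin 4) (Fin 4) ℂ) : ℝ := Λ₁ ρ * (ρ 1 2).re - Λ₂ ρ * (ρ 0 3).re

open scoped Classical in
/-- Positive semidefinite square root (junk value `0` off the PSD cone). -/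
def msqrt (A : Matrix (Fin 4) (Fin 4) ℂ) : Matrix (Fin 4) (Fin 4) ℂ :=
  if h : A.PosSemidef then
    (h.1.eigenvectorUnitary : Matrix (Fin 4) (Fin 4) ℂ) *
      diagonal ((↑) ∘ (√·) ∘ h.1.eigenvalues) *
      (star h.1.eigenvectorUnitary : Matrix (Fin 4) (Fin 4) ℂ)
  else 0

/-- The Bures distance between two states. -/
def dB (ρa ρb : Matrix (Fin 4) (Fin 4) ℂ) : ℝ :=
  Real.sqrt (2 - 2 * ((msqrt (msqrt ρb * ρa * msqrt ρb)).trace).re)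

/-- The Bures distance from `ρ` to the set `Ē` of the four Bell states
(the minimum over the four Bell states). -/
def dBBell (ρ : Matrix (Fin 4) (Fin 4) ℂ) : ℝ :=
  min (min (dB ρ (outer PsiPlus)) (dB ρ (outer PsiMinus)))
      (min (dB ρ (outer PhiPlus)) (dB ρ (outer PhiMinus)))

/-! ### Matrix auxiliary lemmas -/

lemma outer_posSemidef (ξ : Fin 4 → ℂ) : (outer ξ).PosSemidef := by
  refine PosSemidef.of_dotProduct_mulVec_nonneg ?_ ?_
  · ext i j
    simp [outer, vecMulVec_apply, conjTranspose_apply, mul_comm]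
  · intro x
    have : star x ⬝ᵥ (outer ξ) *ᵥ x = (star x ⬝ᵥ ξ) * star (star x ⬝ᵥ ξ) := by
      simp [outer, dotProduct, mulVec, vecMulVec_apply, Finset.mul_sum, Finset.sum_mul,
        Fin.sum_univ_four]
      ring
    rw [this]
    exact mul_star_self_nonneg _

lemma outer_mul_outer (ξ : Fin 4 → ℂ) (hξ : star ξ ⬝ᵥ ξ = 1) :
    outer ξ * outer ξ = outer ξ := by
  ext i j
  simp only [outer, mul_apply, vecMulVec_apply, Fin.sum_univ_four] at *
  simp only [dotProduct, Fin.sum_univ_four, Pi.star_apply] at hξ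
  linear_combination (ξ i * star (ξ j)) * hξ

lemma outer_conj (ρ : Matrix (Fin 4) (Fin 4) ℂ) (ξ : Fin 4 → ℂ) :
    outer ξ * ρ * outer ξ = (star ξ ⬝ᵥ ρ *ᵥ ξ) • outer ξ := by
  ext i j
  simp only [outer, mul_apply, vecMulVec_apply, Fin.sum_univ_four, Matrix.smul_apply, dotProduct,
    mulVec, Pi.star_apply, smul_eq_mul]
  ring

lemma outer_trace (ξ : Fin 4 → ℂ) (hξ : star ξ ⬝ᵥ ξ = 1) : (outer ξ).trace = 1 := by
  simp only [dotProduct, Fin.sum_univ_four, Pi.star_apply] at hξ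
  simp only [trace, diag_apply, outer, vecMulVec_apply, Fin.sum_univ_four]
  linear_combination hξ

open scoped MatrixOrder in
lemma msqrt_of_posSemidef {A B : Matrix (Fin 4) (Fin 4) ℂ} (hB : B.PosSemidef)
    (h : B ^ 2 = A) : msqrt A = B := by
  have hA : A.PosSemidef := h ▸ hB.pow 2
  rw [msqrt, dif_pos hA]
  have e : cfc Real.sqrt A = B := by
    have e1 : CFC.sqrt A = B := CFC.sqrt_unique (by rw [← sq]; exact h) hB.nonneg
    rw [← e1, CFC.sqrt_eq_cfc, cfc_nnreal_eq_real _ A]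
    congr 1; funext x; rw [Real.sqrt.eq_1]
  rw [← e, hA.1.cfc_eq, IsHermitian.cfc, Unitary.conjStarAlgAut_apply]
  rfl

lemma smul_posSemidef {P : Matrix (Fin 4) (Fin 4) ℂ} (h : P.PosSemidef) (r : ℝ) (hr : 0 ≤ r) :
    ((r : ℂ) • P).PosSemidef := by
  refine PosSemidef.of_dotProduct_mulVec_nonneg ?_ ?_
  · unfold Matrix.IsHermitian
    rw [Matrix.conjTranspose_smul, h.1.eq]
    norm_num
  · intro x
    rw [Matrix.smul_mulVec, dotProduct_smul, smul_eq_mul]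
    exact mul_nonneg (by exact_mod_cast Complex.zero_le_real.2 hr) (h.dotProduct_mulVec_nonneg x)

lemma fid_nonneg (ρ : Matrix (Fin 4) (Fin 4) ℂ) (hρ : ρ.PosSemidef) (ξ : Fin 4 → ℂ) :
    0 ≤ (star ξ ⬝ᵥ ρ *ᵥ ξ).re := by
  have := hρ.dotProduct_mulVec_nonneg ξ
  rw [Complex.le_def] at this
  exact this.1

/-- The key computation: for a unit vector `ξ`, the Bures distance of `ρ` to `ξξ*` is
`√(2 - 2√F)` where `F` is the fidelity `Re (ξ*ρξ)`. -/
lemma dB_outer (ρ : Matrix (Fin 4) (Fin 4) ℂ) (hρ : ρ.PosSemidef) (ξ : Fin 4 → ℂ)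
    (hξ : star ξ ⬝ᵥ ξ = 1) :
    dB ρ (outer ξ) = Real.sqrt (2 - 2 * Real.sqrt ((star ξ ⬝ᵥ ρ *ᵥ ξ).re)) := by
  set c : ℂ := star ξ ⬝ᵥ ρ *ᵥ ξ with hc
  have hc0 : (0 : ℂ) ≤ c := hρ.dotProduct_mulVec_nonneg ξ
  have hcre : (0:ℝ) ≤ c.re := by
    rw [Complex.le_def] at hc0; exact hc0.1
  have hcim : c.im = 0 := by
    rw [Complex.le_def] at hc0; exact hc0.2.symm
  have hceq : c = (c.re : ℂ) := by
    apply Complex.ext <;> simp [hcim]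
  have h1 : msqrt (outer ξ) = outer ξ :=
    msqrt_of_posSemidef (outer_posSemidef ξ) (by rw [pow_two]; exact outer_mul_outer ξ hξ)
  set r : ℝ := Real.sqrt c.re with hr
  have hr0 : 0 ≤ r := Real.sqrt_nonneg _
  have h2 : msqrt (outer ξ * ρ * outer ξ) = (r : ℂ) • outer ξ := by
    rw [outer_conj ρ ξ, ← hc]
    apply msqrt_of_posSemidef (smul_posSemidef (outer_posSemidef ξ) r hr0)
    rw [pow_two, smul_mul_smul_comm, outer_mul_outer ξ hξ, hceq]
    congr 1
    rw [← Complex.ofReal_mul, Real.mul_self_sqrt hcre]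
  have h3 : ((msqrt (msqrt (outer ξ) * ρ * msqrt (outer ξ))).trace).re = r := by
    rw [h1, h2, trace_smul, outer_trace ξ hξ, smul_eq_mul, mul_one, Complex.ofReal_re]
  rw [dB, h3]

/-! ### Bell-vector computations -/

lemma conj_inv_sqrt2 : (starRingEnd ℂ) ((Real.sqrt 2 : ℂ)⁻¹) = (Real.sqrt 2 : ℂ)⁻¹ := by
  rw [map_inv₀, Complex.conj_ofReal]

lemma inv_sqrt2_sq : ((Real.sqrt 2 : ℂ)⁻¹) * ((Real.sqrt 2 : ℂ)⁻¹) = (2 : ℂ)⁻¹ := by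
  rw [← mul_inv]
  congr 1
  rw [← Complex.ofReal_mul, Real.mul_self_sqrt (by norm_num)]
  norm_num

lemma psiPlus_unit : star PsiPlus ⬝ᵥ PsiPlus = 1 := by
  simp only [dotProduct, Fin.sum_univ_four, Pi.star_apply, PsiPlus, Matrix.cons_val_zero,
    Matrix.cons_val_one, Matrix.head_cons, Matrix.cons_val_two, Matrix.tail_cons,
    Matrix.cons_val_three, Complex.star_def, conj_inv_sqrt2, map_zero]
  linear_combination 2 * inv_sqrt2_sq

lemma psiMinus_unit : star PsiMinus ⬝ᵥ PsiMinus = 1 := by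
  simp only [dotProduct, Fin.sum_univ_four, Pi.star_apply, PsiMinus, Matrix.cons_val_zero,
    Matrix.cons_val_one, Matrix.head_cons, Matrix.cons_val_two, Matrix.tail_cons,
    Matrix.cons_val_three, Complex.star_def, map_zero, map_neg, conj_inv_sqrt2]
  linear_combination 2 * inv_sqrt2_sq

lemma phiPlus_unit : star PhiPlus ⬝ᵥ PhiPlus = 1 := by
  simp only [dotProduct, Fin.sum_univ_four, Pi.star_apply, PhiPlus, Matrix.cons_val_zero,
    Matrix.cons_val_one, Matrix.head_cons, Matrix.cons_val_two, Matrix.tail_cons,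
    Matrix.cons_val_three, Complex.star_def, conj_inv_sqrt2, map_zero]
  linear_combination 2 * inv_sqrt2_sq

lemma phiMinus_unit : star PhiMinus ⬝ᵥ PhiMinus = 1 := by
  simp only [dotProduct, Fin.sum_univ_four, Pi.star_apply, PhiMinus, Matrix.cons_val_zero,
    Matrix.cons_val_one, Matrix.head_cons, Matrix.cons_val_two, Matrix.tail_cons,
    Matrix.cons_val_three, Complex.star_def, map_zero, map_neg, conj_inv_sqrt2]
  linear_combination 2 * inv_sqrt2_sq

lemma herm_re (ρ : Matrix (Fin 4) (Fin 4) ℂ) (hH : ρ.IsHermitian) (i j : Fin 4) :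
    (ρ j i).re = (ρ i j).re := by
  have := congrFun (congrFun hH.eq i) j
  rw [conjTranspose_apply] at this
  rw [← this]
  simp [Complex.star_def]

lemma re_half (z : ℂ) : ((2:ℂ)⁻¹ * z).re = z.re / 2 := by
  rw [show ((2:ℂ)⁻¹ : ℂ) = ((2⁻¹ : ℝ) : ℂ) by norm_num, Complex.re_ofReal_mul]
  ring

lemma fid_psiPlus (ρ : Matrix (Fin 4) (Fin 4) ℂ) (hH : ρ.IsHermitian) :
    (star PsiPlus ⬝ᵥ ρ *ᵥ PsiPlus).re = (Λ₁ ρ + 2*(ρ 0 3).re)/2 := by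
  have hc : star PsiPlus ⬝ᵥ ρ *ᵥ PsiPlus
      = (2:ℂ)⁻¹ * (ρ 0 0 + ρ 0 3 + ρ 3 0 + ρ 3 3) := by
    simp only [dotProduct, mulVec, Fin.sum_univ_four, Pi.star_apply, PsiPlus,
      Matrix.cons_val_zero, Matrix.cons_val_one, Matrix.head_cons, Matrix.cons_val_two,
      Matrix.tail_cons, Matrix.cons_val_three, Complex.star_def, conj_inv_sqrt2, map_zero]
    linear_combination (ρ 0 0 + ρ 0 3 + ρ 3 0 + ρ 3 3) * inv_sqrt2_sq
  rw [hc, re_half]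
  simp only [Complex.add_re]
  rw [herm_re ρ hH 0 3, Λ₁]
  ring

lemma fid_psiMinus (ρ : Matrix (Fin 4) (Fin 4) ℂ) (hH : ρ.IsHermitian) :
    (star PsiMinus ⬝ᵥ ρ *ᵥ PsiMinus).re = (Λ₁ ρ - 2*(ρ 0 3).re)/2 := by
  have hc : star PsiMinus ⬝ᵥ ρ *ᵥ PsiMinus
      = (2:ℂ)⁻¹ * (ρ 0 0 - ρ 0 3 - ρ 3 0 + ρ 3 3) := by
    simp only [dotProduct, mulVec, Fin.sum_univ_four, Pi.star_apply, PsiMinus,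
      Matrix.cons_val_zero, Matrix.cons_val_one, Matrix.head_cons, Matrix.cons_val_two,
      Matrix.tail_cons, Matrix.cons_val_three, Complex.star_def, map_zero, map_neg,
      conj_inv_sqrt2]
    linear_combination (ρ 0 0 - ρ 0 3 - ρ 3 0 + ρ 3 3) * inv_sqrt2_sq
  rw [hc, re_half]
  simp only [Complex.add_re, Complex.sub_re]
  rw [herm_re ρ hH 0 3, Λ₁]
  ring

lemma fid_phiPlus (ρ : Matrix (Fin 4) (Fin 4) ℂ) (hH : ρ.IsHermitian) :
    (star PhiPlus ⬝ᵥ ρ *ᵥ PhiPlus).re = (Λ₂ ρ + 2*(ρ 1 2).re)/2 := by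
  have hc : star PhiPlus ⬝ᵥ ρ *ᵥ PhiPlus
      = (2:ℂ)⁻¹ * (ρ 1 1 + ρ 1 2 + ρ 2 1 + ρ 2 2) := by
    simp only [dotProduct, mulVec, Fin.sum_univ_four, Pi.star_apply, PhiPlus,
      Matrix.cons_val_zero, Matrix.cons_val_one, Matrix.head_cons, Matrix.cons_val_two,
      Matrix.tail_cons, Matrix.cons_val_three, Complex.star_def, conj_inv_sqrt2, map_zero]
    linear_combination (ρ 1 1 + ρ 1 2 + ρ 2 1 + ρ 2 2) * inv_sqrt2_sq
  rw [hc, re_half]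
  simp only [Complex.add_re]
  rw [herm_re ρ hH 1 2, Λ₂]
  ring

lemma fid_phiMinus (ρ : Matrix (Fin 4) (Fin 4) ℂ) (hH : ρ.IsHermitian) :
    (star PhiMinus ⬝ᵥ ρ *ᵥ PhiMinus).re = (Λ₂ ρ - 2*(ρ 1 2).re)/2 := by
  have hc : star PhiMinus ⬝ᵥ ρ *ᵥ PhiMinus
      = (2:ℂ)⁻¹ * (ρ 1 1 - ρ 1 2 - ρ 2 1 + ρ 2 2) := by
    simp only [dotProduct, mulVec, Fin.sum_univ_four, Pi.star_apply, PhiMinus,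
      Matrix.cons_val_zero, Matrix.cons_val_one, Matrix.head_cons, Matrix.cons_val_two,
      Matrix.tail_cons, Matrix.cons_val_three, Complex.star_def, map_zero, map_neg,
      conj_inv_sqrt2]
    linear_combination (ρ 1 1 - ρ 1 2 - ρ 2 1 + ρ 2 2) * inv_sqrt2_sq
  rw [hc, re_half]
  simp only [Complex.add_re, Complex.sub_re]
  rw [herm_re ρ hH 1 2, Λ₂]
  ring

lemma trace_re (ρ : Matrix (Fin 4) (Fin 4) ℂ) (h : ρ.trace = 1) : Λ₁ ρ + Λ₂ ρ = 1 := by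
  have : (ρ.trace).re = 1 := by rw [h]; simp
  simp only [trace, diag_apply, Fin.sum_univ_four, Complex.add_re] at this
  rw [Λ₁, Λ₂]
  linarith

/-! ### Real-analysis lemmas -/

lemma poly_up (a b g1 g2 : ℝ) (hab : a + b = 1)
    (h1 : g1 ≤ a) (h1' : -g1 ≤ a) (h2 : g2 ≤ b) (h2' : -g2 ≤ b) :
    a*b + 1 - (g1+g2)^2 ≤ 4*(2 - (a + g1)) := by
  nlinarith [sq_nonneg (g1+g2), sq_nonneg (a-g1), sq_nonneg (b+g2), sq_nonneg (a+g1-b-g2),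
    sq_nonneg (1-a-g1)]

lemma poly_low (a b u v G : ℝ) (hab : a + b = 1)
    (hu0 : 0 ≤ u) (hu : u ≤ a) (hv0 : 0 ≤ v) (hv : v ≤ b)
    (hm : b + v ≤ a + u) (hG : G^2 ≤ (u+v)^2) :
    2 - (a + u) ≤ 6*(a*b + 1 - G^2) := by
  nlinarith [sq_nonneg (u+v), sq_nonneg (a-u), sq_nonneg (b-v), sq_nonneg (a+u-b-v),
    mul_nonneg hu0 hv0, mul_nonneg (le_trans hv0 hv) (le_trans hu0 hu)]

lemma up_one (V2 x : ℝ) (hx0 : 0 ≤ x) (hkey : V2 ≤ 4*(2-x)) :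
    Real.sqrt V2 ≤ 2 * Real.sqrt 2 * Real.sqrt (2 - 2*Real.sqrt (x/2)) := by
  have h1 : Real.sqrt (x/2) ≤ (2+x)/4 := by
    rw [Real.sqrt_le_left (by linarith)]
    nlinarith [sq_nonneg (2-x)]
  have h2 : V2 ≤ 8 * (2 - 2*Real.sqrt (x/2)) := by nlinarith
  calc Real.sqrt V2 ≤ Real.sqrt (8 * (2 - 2*Real.sqrt (x/2))) := Real.sqrt_le_sqrt h2
    _ = 2 * Real.sqrt 2 * Real.sqrt (2 - 2*Real.sqrt (x/2)) := by
        rw [show (8:ℝ) = (2*Real.sqrt 2)^2 by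
          rw [mul_pow, Real.sq_sqrt (by norm_num : (0:ℝ) ≤ 2)]; norm_num]
        rw [Real.sqrt_mul (by positivity), Real.sqrt_sq (by positivity)]

lemma low_one (V2 D x : ℝ) (hD0 : 0 ≤ D) (hx0 : 0 ≤ x) (hx2 : x ≤ 2)
    (hD : D ≤ Real.sqrt (2 - 2*Real.sqrt (x/2))) (hkey : 2 - x ≤ 6*V2) :
    (1 / Real.sqrt 6) * D ≤ Real.sqrt V2 := by
  have hs : x/2 ≤ Real.sqrt (x/2) := by
    rw [Real.le_sqrt (by linarith) (by linarith)]
    nlinarith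
  have hs1 : Real.sqrt (x/2) ≤ 1 := by
    rw [Real.sqrt_le_left (by norm_num)]; nlinarith
  have hD2 : D^2 ≤ 2 - 2*Real.sqrt (x/2) := by
    nlinarith [Real.sq_sqrt (by linarith : (0:ℝ) ≤ 2 - 2*Real.sqrt (x/2)),
      Real.sqrt_nonneg (2 - 2*Real.sqrt (x/2)), sq_nonneg (D - Real.sqrt (2 - 2*Real.sqrt (x/2)))]
  have h6 : (0:ℝ) < Real.sqrt 6 := Real.sqrt_pos.2 (by norm_num)
  rw [Real.le_sqrt (by positivity)]
  · rw [mul_pow, div_pow, one_pow, Real.sq_sqrt (by norm_num : (0:ℝ) ≤ 6)]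
    nlinarith
  · nlinarith

/-! ### Main theorem -/

theorem lyapunov_bures_bounds (ρ : Matrix (Fin 4) (Fin 4) ℂ) (hρ : IsState ρ) :
    (1 / Real.sqrt 6) * dBBell ρ ≤ Real.sqrt (Λ₁ ρ * Λ₂ ρ + 1 - Γ ρ ^ 2) ∧
    Real.sqrt (Λ₁ ρ * Λ₂ ρ + 1 - Γ ρ ^ 2) ≤ 2 * Real.sqrt 2 * dBBell ρ := by
  obtain ⟨hPSD, htr⟩ := hρ
  have hH := hPSD.1
  set a := Λ₁ ρ with ha
  set b := Λ₂ ρ with hb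
  set g1 := 2*(ρ 0 3).re with hg1
  set g2 := 2*(ρ 1 2).re with hg2
  have hab : a + b = 1 := trace_re ρ htr
  -- the four Bures distances
  have d1p : dB ρ (outer PsiPlus) = Real.sqrt (2 - 2*Real.sqrt ((a + g1)/2)) := by
    rw [dB_outer ρ hPSD PsiPlus psiPlus_unit, fid_psiPlus ρ hH]
  have d1m : dB ρ (outer PsiMinus) = Real.sqrt (2 - 2*Real.sqrt ((a - g1)/2)) := by
    rw [dB_outer ρ hPSD PsiMinus psiMinus_unit, fid_psiMinus ρ hH]
  have d2p : dB ρ (outer PhiPlus) = Real.sqrt (2 - 2*Real.sqrt ((b + g2)/2)) := by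
    rw [dB_outer ρ hPSD PhiPlus phiPlus_unit, fid_phiPlus ρ hH]
  have d2m : dB ρ (outer PhiMinus) = Real.sqrt (2 - 2*Real.sqrt ((b - g2)/2)) := by
    rw [dB_outer ρ hPSD PhiMinus phiMinus_unit, fid_phiMinus ρ hH]
  -- fidelity nonnegativity constraints
  have h1p : (0:ℝ) ≤ (a + g1)/2 := by
    have := fid_nonneg ρ hPSD PsiPlus; rwa [fid_psiPlus ρ hH] at this
  have h1m : (0:ℝ) ≤ (a - g1)/2 := by
    have := fid_nonneg ρ hPSD PsiMinus; rwa [fid_psiMinus ρ hH] at this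
  have h2p : (0:ℝ) ≤ (b + g2)/2 := by
    have := fid_nonneg ρ hPSD PhiPlus; rwa [fid_phiPlus ρ hH] at this
  have h2m : (0:ℝ) ≤ (b - g2)/2 := by
    have := fid_nonneg ρ hPSD PhiMinus; rwa [fid_phiMinus ρ hH] at this
  have hg1a : -g1 ≤ a := by linarith
  have hg1a' : g1 ≤ a := by linarith
  have hg2b : -g2 ≤ b := by linarith
  have hg2b' : g2 ≤ b := by linarith
  have ha0 : 0 ≤ a := by linarith
  have hb0 : 0 ≤ b := by linarith
  have hGamma : Γ ρ = g2 + g1 := rfl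
  have hV : Λ₁ ρ * Λ₂ ρ + 1 - Γ ρ ^ 2 = a*b + 1 - (g1+g2)^2 := by
    rw [hGamma]; ring
  rw [hV]
  set V2 := a*b + 1 - (g1+g2)^2 with hV2def
  have hdB0 : 0 ≤ dBBell ρ := by
    apply le_min (le_min ?_ ?_) (le_min ?_ ?_) <;>
      first
      | exact Real.sqrt_nonneg _
  constructor
  · -- lower bound
    set u := |g1| with hu
    set v := |g2| with hv
    have hu0 : 0 ≤ u := abs_nonneg _
    have hv0 : 0 ≤ v := abs_nonneg _
    have hua : u ≤ a := abs_le.2 ⟨by linarith, hg1a'⟩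
    have hvb : v ≤ b := abs_le.2 ⟨by linarith, hg2b'⟩
    have hG : (g1+g2)^2 ≤ (u+v)^2 := by
      have h1 : |g1+g2| ≤ u + v := abs_add_le g1 g2
      calc (g1+g2)^2 = |g1+g2|^2 := (sq_abs _).symm
        _ ≤ (u+v)^2 := by nlinarith [abs_nonneg (g1+g2)]
    -- distance to max-fidelity Ψ branch
    have hDpsi : dBBell ρ ≤ Real.sqrt (2 - 2*Real.sqrt ((a + u)/2)) := by
      rcases abs_cases g1 with ⟨h, _⟩ | ⟨h, _⟩
      · rw [hu, h, ← d1p]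
        exact le_trans (min_le_left _ _) (min_le_left _ _)
      · rw [hu, h, ← show a - g1 = a + -g1 by ring, ← d1m]
        exact le_trans (min_le_left _ _) (min_le_right _ _)
    have hDphi : dBBell ρ ≤ Real.sqrt (2 - 2*Real.sqrt ((b + v)/2)) := by
      rcases abs_cases g2 with ⟨h, _⟩ | ⟨h, _⟩
      · rw [hv, h, ← d2p]
        exact le_trans (min_le_right _ _) (min_le_left _ _)
      · rw [hv, h, ← show b - g2 = b + -g2 by ring, ← d2m]
        exact le_trans (min_le_right _ _) (min_le_right _ _)
    rcases le_total (b + v) (a + u) with hmax | hmax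
    · exact low_one V2 (dBBell ρ) (a+u) hdB0 (by linarith) (by linarith)
        hDpsi (poly_low a b u v (g1+g2) hab hu0 hua hv0 hvb hmax hG)
    · have hkey := poly_low b a v u (g1+g2) (by linarith) hv0 hvb hu0 hua hmax
        (by rw [show (v+u) = (u+v) by ring]; exact hG)
      exact low_one V2 (dBBell ρ) (b+v) hdB0 (by linarith) (by linarith)
        hDphi (by rw [hV2def]; rw [show b*a = a*b from mul_comm b a] at hkey; linarith)
  · -- upper bound
    have c2 : (0:ℝ) < 2 * Real.sqrt 2 := by positivity
    have p1p : V2 ≤ 4*(2-(a+g1)) := poly_up a b g1 g2 hab hg1a' hg1a hg2b' hg2b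
    have p1m : V2 ≤ 4*(2-(a-g1)) := by
      have h := poly_up a b (-g1) (-g2) hab (by linarith) (by linarith) (by linarith)
        (by linarith)
      have e : (-g1 + -g2)^2 = (g1+g2)^2 := by ring
      rw [e] at h
      rw [hV2def]
      linarith
    have p2p : V2 ≤ 4*(2-(b+g2)) := by
      have h := poly_up b a g2 g1 (by linarith) hg2b' hg2b hg1a' hg1a
      have e : (g2 + g1)^2 = (g1+g2)^2 := by ring
      rw [e, show b*a = a*b from mul_comm b a] at h
      rw [hV2def]
      linarith
    have p2m : V2 ≤ 4*(2-(b-g2)) := by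
      have h := poly_up b a (-g2) (-g1) (by linarith) (by linarith) (by linarith) (by linarith)
        (by linarith)
      have e : (-g2 + -g1)^2 = (g1+g2)^2 := by ring
      rw [e, show b*a = a*b from mul_comm b a] at h
      rw [hV2def]
      linarith
    have k1p : Real.sqrt V2 ≤ 2 * Real.sqrt 2 * dB ρ (outer PsiPlus) := by
      rw [d1p]; exact up_one V2 (a+g1) (by linarith) p1p
    have k1m : Real.sqrt V2 ≤ 2 * Real.sqrt 2 * dB ρ (outer PsiMinus) := by
      rw [d1m]; exact up_one V2 (a-g1) (by linarith) p1m
    have k2p : Real.sqrt V2 ≤ 2 * Real.sqrt 2 * dB ρ (outer PhiPlus) := by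
      rw [d2p]; exact up_one V2 (b+g2) (by linarith) p2p
    have k2m : Real.sqrt V2 ≤ 2 * Real.sqrt 2 * dB ρ (outer PhiMinus) := by
      rw [d2m]; exact up_one V2 (b-g2) (by linarith) p2m
    have m1p : Real.sqrt V2 / (2*Real.sqrt 2) ≤ dB ρ (outer PsiPlus) :=
      (div_le_iff₀ c2).2 (by linarith)
    have m1m : Real.sqrt V2 / (2*Real.sqrt 2) ≤ dB ρ (outer PsiMinus) :=
      (div_le_iff₀ c2).2 (by linarith)
    have m2p : Real.sqrt V2 / (2*Real.sqrt 2) ≤ dB ρ (outer PhiPlus) :=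
      (div_le_iff₀ c2).2 (by linarith)
    have m2m : Real.sqrt V2 / (2*Real.sqrt 2) ≤ dB ρ (outer PhiMinus) :=
      (div_le_iff₀ c2).2 (by linarith)
    have hmin : Real.sqrt V2 / (2*Real.sqrt 2) ≤ dBBell ρ :=
      le_min (le_min m1p m1m) (le_min m2p m2m)
    calc Real.sqrt V2 = Real.sqrt V2 / (2 * Real.sqrt 2) * (2 * Real.sqrt 2) := by
          field_simp
      _ ≤ dBBell ρ * (2 * Real.sqrt 2) := mul_le_mul_of_nonneg_right hmin (le_of_lt c2)
      _ = 2 * Real.sqrt 2 * dBBell ρ := by ring
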